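/- arXiv:math/0512375 — 2 statements merged into one kernel-verified Lean document; each statement's English description precedes it below -/
import Mathlib

section
/- Let k be a field of characteristic 0 with algebraic closure \bar{k}, and let A be a finitely generated k-algebra that is an integral domain. Then the Galois group Gal(\bar{k}/k) = Aut(\bar{k}/k), acting on B := \bar{k} ⊗_k A through its action on the first tensor factor, acts transitively on the (finite) set of minimal prime ideals of B. -/
/-- Every element of a minimal prime of a commutative ring is a zero divisor. -/
theorem aux_zerodiv {R : Type*} [CommRing R] {q : Ideal R}
    (hq : q ∈ minimalPrimes R) {x : R} (hx : x ∈ q) (hnz : x ∈ nonZeroDivisors R) : False := by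
  haveI : q.IsPrime := hq.1.1
  haveI : Ring.KrullDimLE 0 (Localization.AtPrime q) := .of_isLocalization _ hq _
  have h1 : IsNilpotent (algebraMap R (Localization q.primeCompl) x) :=
    (Ring.KrullDimLE.isNilpotent_iff_mem_maximalIdeal (R := Localization.AtPrime q)).2
      ((IsLocalization.AtPrime.to_map_mem_maximal_iff _ q x).2 hx)
  obtain ⟨n, hn⟩ := h1
  rw [← map_pow] at hn
  obtain ⟨m, hm⟩ := (IsLocalization.map_eq_zero_iff q.primeCompl _ _).1 hn
  have hxn : (x ^ n) ∈ nonZeroDivisors R := pow_mem hnz n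
  have hm0 : (m : R) = 0 := (mem_nonZeroDivisors_iff_right.1 hxn) _ hm
  exact m.2 (by rw [hm0]; exact q.zero_mem)

/-- The image of a minimal prime under a ring automorphism is a minimal prime. -/
theorem aux_map_minimal {k : Type*} {R : Type*} [CommSemiring k] [CommRing R] [Algebra k R]
    (e : R ≃ₐ[k] R) {p : Ideal R} (hp : p ∈ minimalPrimes R) :
    Ideal.map e p ∈ minimalPrimes R := by
  haveI hpp : p.IsPrime := hp.1.1
  have hmapeq : Ideal.map e p = Ideal.comap e.symm p := by
    apply le_antisymm
    · rw [Ideal.map_le_iff_le_comap]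
      intro z hz
      rw [Ideal.mem_comap, Ideal.mem_comap]
      simpa using hz
    · intro z hz
      rw [Ideal.mem_comap] at hz
      have := Ideal.mem_map_of_mem e hz
      simpa using this
  rw [hmapeq]
  refine ⟨⟨Ideal.IsPrime.comap _, bot_le⟩, ?_⟩
  rintro Q ⟨hQ, -⟩ hle
  haveI := hQ
  have h2 : Ideal.comap e Q ≤ p := by
    intro r hr
    rw [Ideal.mem_comap] at hr
    have := hle hr
    rw [Ideal.mem_comap] at this
    simpa using this
  have h3 : p ≤ Ideal.comap e Q := hp.2 ⟨Ideal.IsPrime.comap _, bot_le⟩ h2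
  intro r hr
  rw [Ideal.mem_comap] at hr
  have := h3 hr
  rw [Ideal.mem_comap] at this
  simpa using this

/-- An element of the algebraic closure fixed by all automorphisms lies in the base field. -/
theorem aux_fixed (k : Type) [Field k] [CharZero k] {c : AlgebraicClosure k}
    (h : ∀ σ : AlgebraicClosure k ≃ₐ[k] AlgebraicClosure k, σ c = c) :
    c ∈ (algebraMap k (AlgebraicClosure k)).range := by
  have hint : IsIntegral k c := Algebra.IsIntegral.isIntegral c
  have hsep : (minpoly k c).Separable := (minpoly.irreducible hint).separable
  have hsplit : Polynomial.Splits ((minpoly k c).map (algebraMap k (AlgebraicClosure k))) :=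
    IsAlgClosed.splits _
  have hsub : ∀ x ∈ (minpoly k c).rootSet (AlgebraicClosure k), x = c := by
    intro x hx
    obtain ⟨-, hev⟩ := Polynomial.mem_rootSet.1 hx
    obtain ⟨σ, hσ⟩ := minpoly.exists_algEquiv_of_root' hint.isAlgebraic hev
    rw [← hσ, h σ]
  have hcard : Fintype.card ((minpoly k c).rootSet (AlgebraicClosure k))
      = (minpoly k c).natDegree := Polynomial.card_rootSet_eq_natDegree hsep hsplit
  have hle : (minpoly k c).natDegree ≤ 1 := by
    rw [← hcard]
    refine Fintype.card_le_one_iff.2 fun a b => Subtype.ext ?_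
    rw [hsub a.1 a.2, hsub b.1 b.2]
  exact minpoly.natDegree_eq_one_iff.1 (le_antisymm hle (minpoly.natDegree_pos hint))

/-- `1 ⊗ a` is a non-zero-divisor in `K ⊗[k] A` for `a ≠ 0` in a domain `A`. -/
theorem aux_nzd (k : Type) [Field k] (K : Type) [Field K] [Algebra k K]
    (A : Type) [CommRing A] [IsDomain A] [Algebra k A] {a : A} (ha : a ≠ 0) :
    (1 ⊗ₜ[k] a : TensorProduct k K A) ∈ nonZeroDivisors (TensorProduct k K A) := by
  rw [mem_nonZeroDivisors_iff_right]
  intro z hz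
  have hmul : ∀ w : TensorProduct k K A,
      (LinearMap.lTensor K (LinearMap.mulLeft k a)) w = w * (1 ⊗ₜ[k] a) := by
    intro w
    induction w using TensorProduct.induction_on with
    | zero => simp
    | tmul c b => simp [Algebra.TensorProduct.tmul_mul_tmul, mul_comm]
    | add u v hu hv => rw [map_add, add_mul, hu, hv]
  have hinj : Function.Injective (LinearMap.lTensor K (LinearMap.mulLeft k a)) :=
    Module.Flat.lTensor_preserves_injective_linearMap _
      (fun u v huv => mul_right_injective₀ ha (by simpa using huv))
  apply hinj
  rw [hmul, hz, map_zero]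

/-- Semilinearity of the Galois action on `K ⊗[k] A` with respect to a base-changed basis. -/
theorem aux_repr (k K A : Type) [Field k] [Field K] [Algebra k K] [CommRing A] [Algebra k A]
    {ι : Type} (b : Module.Basis ι k A) (σ : K ≃ₐ[k] K) (z : TensorProduct k K A) (i : ι) :
    (b.baseChange K).repr
      ((Algebra.TensorProduct.congr σ (AlgEquiv.refl : A ≃ₐ[k] A)) z) i
      = σ ((b.baseChange K).repr z i) := by
  induction z using TensorProduct.induction_on with
  | zero => simp
  | tmul c a =>
    simp [Algebra.TensorProduct.congr_apply, Algebra.TensorProduct.map_tmul,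
      Module.Basis.baseChange_repr_tmul, map_smul]
  | add u v hu hv => simp only [map_add, Finsupp.add_apply, hu, hv]

/-- Let `k` be a field of characteristic 0 with algebraic closure `k̄ = AlgebraicClosure k`,
and let `A` be a finitely generated `k`-algebra which is an integral domain. Then the
Galois group `Gal(k̄/k) = Aut(k̄/k)`, acting on `B = k̄ ⊗[k] A` through the first tensor
factor, acts transitively on the set of minimal prime ideals of `B`. -/
theorem galois_transitive_on_minimal_primes
    (k : Type) [Field k] [CharZero k]
    (A : Type) [CommRing A] [IsDomain A] [Algebra k A]
    (hfg : Algebra.FiniteType k A)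
    (p q : Ideal (TensorProduct k (AlgebraicClosure k) A))
    (hp : p ∈ minimalPrimes (TensorProduct k (AlgebraicClosure k) A))
    (hq : q ∈ minimalPrimes (TensorProduct k (AlgebraicClosure k) A)) :
    ∃ σ : AlgebraicClosure k ≃ₐ[k] AlgebraicClosure k,
      Ideal.map (Algebra.TensorProduct.congr σ (AlgEquiv.refl : A ≃ₐ[k] A)) p = q := by
  classical
  by_contra hcon
  push_neg at hcon
  set K := AlgebraicClosure k with hK
  set B := TensorProduct k K A with hBdef
  haveI := hfg
  haveI : IsNoetherianRing B := Algebra.FiniteType.isNoetherianRing K B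
  set φ : (K ≃ₐ[k] K) → (B ≃ₐ[k] B) :=
    fun σ => Algebra.TensorProduct.congr σ (AlgEquiv.refl : A ≃ₐ[k] A) with hφdef
  haveI hqp : q.IsPrime := hq.1.1
  haveI hpp : p.IsPrime := hp.1.1
  have hmin : ∀ σ, Ideal.map (φ σ) p ∈ minimalPrimes B := fun σ => aux_map_minimal (φ σ) hp
  set O : Set (Ideal B) := Set.range (fun σ : K ≃ₐ[k] K => Ideal.map (φ σ) p) with hOdef
  have hOsub : O ⊆ minimalPrimes B := by rintro _ ⟨σ, rfl⟩; exact hmin σ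
  have hOfin : O.Finite := (minimalPrimes.finite_of_isNoetherianRing B).subset hOsub
  set s : Finset (Ideal B) := hOfin.toFinset with hsdef
  have hmem_s_iff : ∀ r : Ideal B, r ∈ s ↔ r ∈ O := fun r => Set.Finite.mem_toFinset _
  have hqnotle : ∀ r ∈ s, ¬ q ≤ r := by
    intro r hr hle
    obtain ⟨σ, rfl⟩ := (hmem_s_iff r).1 hr
    exact hcon σ (le_antisymm ((hmin σ).2 ⟨hqp, bot_le⟩ hle) hle)
  have hex : ∃ x ∈ q, ∀ r ∈ s, x ∉ r := by
    by_contra hno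
    push_neg at hno
    have hcover : (q : Set B) ⊆ ⋃ r ∈ (↑s : Set (Ideal B)), ((r : Ideal B) : Set B) := by
      intro z hz
      obtain ⟨r, hr, hzr⟩ := hno z hz
      exact Set.mem_biUnion (Finset.mem_coe.2 hr) hzr
    obtain ⟨r, hr, hler⟩ := (Ideal.subset_union_prime (s := s) (f := fun r : Ideal B => r) q q
      (fun i hi _ _ => (hOsub ((hmem_s_iff i).1 hi)).1.1)).1 hcover
    exact hqnotle r hr hler
  obtain ⟨x, hxq, hxnot⟩ := hex
  set T : Set B := Set.range (fun σ : K ≃ₐ[k] K => φ σ x) with hTdef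
  have hTfin : T.Finite := by
    obtain ⟨Sx, hSx⟩ := TensorProduct.exists_finset x
    have hform : ∀ σ : K ≃ₐ[k] K, φ σ x = ∑ i ∈ Sx.attach, σ i.1.1 ⊗ₜ[k] i.1.2 := by
      intro σ
      rw [← Finset.sum_attach Sx (fun i => i.1 ⊗ₜ[k] i.2)] at hSx
      rw [hSx, map_sum]
      refine Finset.sum_congr rfl fun i _ => ?_
      rw [Algebra.TensorProduct.congr_apply, Algebra.TensorProduct.map_tmul]
      rfl
    have hroot : ∀ c : K, (Set.range fun σ : K ≃ₐ[k] K => σ c).Finite := by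
      intro c
      have hint : IsIntegral k c := Algebra.IsIntegral.isIntegral c
      refine ((minpoly k c).rootSet_finite K).subset ?_
      rintro _ ⟨σ, rfl⟩
      rw [Polynomial.mem_rootSet]
      refine ⟨minpoly.ne_zero hint, ?_⟩
      rw [Polynomial.aeval_algHom_apply, minpoly.aeval, map_zero]
    refine (Set.Finite.image (fun v : {i // i ∈ Sx} → K => ∑ i ∈ Sx.attach, v i ⊗ₜ[k] i.1.2)
      (Set.Finite.pi fun i => hroot i.1.1)).subset ?_
    rintro _ ⟨σ, rfl⟩
    exact ⟨fun i => σ i.1.1, fun i _ => ⟨σ, rfl⟩, (hform σ).symm⟩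
  set t : Finset B := hTfin.toFinset with htdef
  have hmem_t_iff : ∀ z : B, z ∈ t ↔ z ∈ T := fun z => Set.Finite.mem_toFinset _
  set y : B := ∏ z ∈ t, z with hydef
  have hφrefl : ∀ z : B, φ AlgEquiv.refl z = z := by
    intro z
    have hre : φ AlgEquiv.refl = AlgEquiv.refl := by
      simp only [hφdef]
      exact Algebra.TensorProduct.congr_refl
    rw [hre]
    rfl
  have hxT : x ∈ t := (hmem_t_iff x).2 ⟨AlgEquiv.refl, hφrefl x⟩
  have hyq : y ∈ q := by
    rw [hydef, ← Finset.mul_prod_erase t _ hxT]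
    exact Ideal.mul_mem_right _ _ hxq
  have hcomp : ∀ (σ τ : K ≃ₐ[k] K) (z : B), φ τ (φ σ z) = φ (σ.trans τ) z := by
    intro σ τ z
    have h1 := Algebra.TensorProduct.congr_trans (S := k) σ τ
      (AlgEquiv.refl : A ≃ₐ[k] A) (AlgEquiv.refl : A ≃ₐ[k] A)
    have hrr : (AlgEquiv.refl : A ≃ₐ[k] A).trans AlgEquiv.refl = AlgEquiv.refl := by
      ext a
      rfl
    rw [hrr] at h1
    simp only [hφdef, h1, AlgEquiv.trans_apply]
  have hTmapset : ∀ τ : K ≃ₐ[k] K, Finset.image (φ τ) t = t := by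
    intro τ
    ext b
    simp only [Finset.mem_image]
    constructor
    · rintro ⟨c, hc, rfl⟩
      obtain ⟨σ, rfl⟩ := (hmem_t_iff c).1 hc
      exact (hmem_t_iff _).2 ⟨σ.trans τ, (hcomp σ τ x).symm⟩
    · intro hb
      obtain ⟨σ, rfl⟩ := (hmem_t_iff b).1 hb
      refine ⟨φ (σ.trans τ.symm) x, (hmem_t_iff _).2 ⟨σ.trans τ.symm, rfl⟩, ?_⟩
      rw [hcomp]
      have heq : (σ.trans τ.symm).trans τ = σ := by
        ext c
        simp
      rw [heq]
  have hinv : ∀ τ : K ≃ₐ[k] K, φ τ y = y := by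
    intro τ
    rw [hydef, map_prod]
    conv_rhs => rw [← hTmapset τ]
    rw [Finset.prod_image (fun a _ b _ h => (φ τ).injective h)]
  have hynotp : y ∉ p := by
    intro hyp
    rw [hydef] at hyp
    obtain ⟨b, hb, hbp⟩ := (Ideal.IsPrime.prod_mem_iff).1 hyp
    obtain ⟨σ, rfl⟩ := (hmem_t_iff b).1 hb
    have hxmem : x ∈ Ideal.map (φ σ.symm) p := by
      have hx' : φ σ.symm (φ σ x) ∈ Ideal.map (φ σ.symm) p := Ideal.mem_map_of_mem _ hbp
      rw [hcomp] at hx'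
      have heq : σ.trans σ.symm = AlgEquiv.refl := by
        ext c
        simp
      rw [heq] at hx'
      rwa [hφrefl x] at hx'
    exact hxnot _ ((hmem_s_iff _).2 ⟨σ.symm, rfl⟩) hxmem
  -- y is Galois-invariant, hence of the form 1 ⊗ a
  set bA : Module.Basis _ k A := Module.Basis.ofVectorSpace k A with hbA
  have hcoef : ∀ i (τ : K ≃ₐ[k] K),
      τ ((bA.baseChange K).repr y i) = (bA.baseChange K).repr y i := by
    intro i τ
    have h2 : (Algebra.TensorProduct.congr τ (AlgEquiv.refl : A ≃ₐ[k] A)) y = y := by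
      have := hinv τ
      simpa only [hφdef] using this
    rw [← aux_repr k K A bA τ y i, h2]
  have hrange : ∀ i, ∃ dv : k, algebraMap k K dv = (bA.baseChange K).repr y i := by
    intro i
    exact RingHom.mem_range.1 (aux_fixed k (fun σ => hcoef i σ))
  choose d hd using hrange
  have hy1 : (1 : K) ⊗ₜ[k] (((bA.baseChange K).repr y).support.sum fun i => d i • bA i) = y := by
    conv_rhs => rw [← (bA.baseChange K).linearCombination_repr y]
    rw [Finsupp.linearCombination_apply, Finsupp.sum, TensorProduct.tmul_sum]
    refine Finset.sum_congr rfl fun i _ => ?_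
    rw [TensorProduct.tmul_smul, ← Module.Basis.baseChange_apply K bA i, ← hd i, algebraMap_smul]
  set a : A := ((bA.baseChange K).repr y).support.sum (fun i => d i • bA i) with hadef
  by_cases haz : a = 0
  · apply hynotp
    have hy0 : y = 0 := by rw [← hy1, haz, TensorProduct.tmul_zero]
    rw [hy0]
    exact p.zero_mem
  · exact aux_zerodiv hq (show (1 : K) ⊗ₜ[k] a ∈ q by rw [hy1]; exact hyq)
      (aux_nzd k K A haz)
end

section
/- Let k be a field of characteristic 0 with algebraic closure \bar{k}, and let A be a finitely generated k-algebra that is an integral domain. Set B := \bar{k} ⊗_k A and assume that the minimal prime ideals of B are pairwise comaximal (i.e., the irreducible components of the base change of Spec A to \bar{k} are pairwise disjoint; this holds, for example, when B is normal). If there exists a prime ideal p of A, p ≠ A, such that the radical of the extension of p to B is a prime ideal (i.e., Spec A contains a geometrically irreducible k-subvariety), then B has a unique minimal prime ideal; that is, Spec A is geometrically irreducible over k. -/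
open TensorProduct

attribute [local instance] Algebra.TensorProduct.rightAlgebra

section Aux
variable (k : Type) [Field k] (A : Type) [CommRing A] [IsDomain A] [Algebra k A]

/-- `AlgebraicClosure k ⊗[k] A` is integral over `A` (via `includeRight`). -/
theorem geomIrred.isIntegral_tensor :
    Algebra.IsIntegral A (TensorProduct k (AlgebraicClosure k) A) := by
  constructor
  intro x
  induction x using TensorProduct.induction_on with
  | zero => exact isIntegral_zero
  | add x y hx hy => exact hx.add hy
  | tmul c a =>
    have h1 : IsIntegral k ((Algebra.TensorProduct.includeLeft :
        AlgebraicClosure k →ₐ[k] TensorProduct k (AlgebraicClosure k) A) c) :=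
      (Algebra.IsIntegral.isIntegral (R := k) c).map _
    have h2 : IsIntegral A ((Algebra.TensorProduct.includeLeft :
        AlgebraicClosure k →ₐ[k] TensorProduct k (AlgebraicClosure k) A) c) :=
      h1.tower_top
    have : (c ⊗ₜ[k] a : TensorProduct k (AlgebraicClosure k) A)
        = (algebraMap A _ a) * (c ⊗ₜ[k] 1) := by
      show _ = (1 ⊗ₜ[k] a) * _
      rw [Algebra.TensorProduct.tmul_mul_tmul, one_mul, mul_one]
    rw [this]
    exact (isIntegral_algebraMap).mul h2

/-- Multiplication by the image of a nonzero element of `A` is injective on the tensor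
product, since `AlgebraicClosure k` is flat over `k`. -/
theorem geomIrred.mul_injective (a : A) (ha : a ≠ 0) :
    Function.Injective (fun x : TensorProduct k (AlgebraicClosure k) A =>
      (algebraMap A _ a) * x) := by
  have hinj : Function.Injective (LinearMap.mulLeft k a) := fun u v huv => by
    simpa [LinearMap.mulLeft_apply] using mul_left_cancel₀ ha huv
  have key := Module.Flat.lTensor_preserves_injective_linearMap
    (M := AlgebraicClosure k) (LinearMap.mulLeft k a) hinj
  have : (fun x : TensorProduct k (AlgebraicClosure k) A => (algebraMap A _ a) * x)
      = (LinearMap.lTensor (AlgebraicClosure k) (LinearMap.mulLeft k a)) := by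
    funext x
    induction x using TensorProduct.induction_on with
    | zero => simp
    | add x y hx hy => simp only [mul_add, map_add, ← hx, ← hy]
    | tmul c b =>
      show (1 ⊗ₜ[k] a) * _ = _
      simp [Algebra.TensorProduct.tmul_mul_tmul]
  rw [this]
  exact key

/-- Every minimal prime of `AlgebraicClosure k ⊗[k] A` contracts to `⊥` in `A`. -/
theorem geomIrred.comap_eq_bot
    (Q : Ideal (TensorProduct k (AlgebraicClosure k) A))
    (hQ : Q ∈ minimalPrimes (TensorProduct k (AlgebraicClosure k) A)) :
    Q.comap (algebraMap A (TensorProduct k (AlgebraicClosure k) A)) = ⊥ := by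
  haveI hQp : Q.IsPrime := hQ.1.1
  rw [eq_bot_iff]
  intro a haQ
  rw [Ideal.mem_comap] at haQ
  by_contra ha0
  have ha : a ≠ 0 := fun h => ha0 (by simp [h])
  -- the image of a is nilpotent in the localization at Q
  set L := Localization Q.primeCompl
  have hmem : algebraMap _ L (algebraMap A _ a) ∈ IsLocalRing.maximalIdeal L :=
    (IsLocalization.AtPrime.to_map_mem_maximal_iff L Q _).mpr haQ
  haveI : Ring.KrullDimLE 0 L := Ring.KrullDimLE.of_isLocalization Q hQ L
  obtain ⟨n, hn⟩ := Ring.KrullDimLE.isNilpotent_iff_mem_maximalIdeal.mpr hmem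
  rw [← map_pow] at hn
  obtain ⟨⟨s, hs⟩, hsn⟩ := (IsLocalization.map_eq_zero_iff Q.primeCompl L _).mp hn
  have h0 : (algebraMap A (TensorProduct k (AlgebraicClosure k) A)) (a ^ n) * s = 0 := by
    rw [map_pow]; rw [mul_comm] at hsn; exact hsn
  have hs0 : s = 0 := by
    have := geomIrred.mul_injective k A (a ^ n) (pow_ne_zero n ha)
      (a₁ := s) (a₂ := 0)
    simp only [mul_zero] at this
    exact this h0
  exact hs (hs0 ▸ Q.zero_mem)

end Aux

/-- Let `k` be a field of characteristic 0, `A` a finitely generated `k`-algebra which is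
a domain, and `B = AlgebraicClosure k ⊗[k] A`. Assume the minimal primes of `B` are
pairwise comaximal (the irreducible components of the base change of `Spec A` are
pairwise disjoint). If `Spec A` contains a geometrically irreducible `k`-subvariety,
i.e. there is a prime ideal `p ⊊ A` whose extension to `B` has prime radical, then `B`
has a unique minimal prime: `Spec A` is geometrically irreducible over `k`. -/
theorem geometrically_irreducible_of_subvariety_of_comaximal_components
    (k : Type) [Field k] [CharZero k]
    (A : Type) [CommRing A] [IsDomain A] [Algebra k A]
    (hfg : Algebra.FiniteType k A)
    (hcomax : ∀ P ∈ minimalPrimes (TensorProduct k (AlgebraicClosure k) A),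
      ∀ Q ∈ minimalPrimes (TensorProduct k (AlgebraicClosure k) A), P ≠ Q → P ⊔ Q = ⊤)
    (p : Ideal A) (hp : p.IsPrime) (hpA : p ≠ ⊤)
    (hgeom : (Ideal.map
        (Algebra.TensorProduct.includeRight : A →ₐ[k] TensorProduct k (AlgebraicClosure k) A)
        p).radical.IsPrime) :
    ∃! P : Ideal (TensorProduct k (AlgebraicClosure k) A),
      P ∈ minimalPrimes (TensorProduct k (AlgebraicClosure k) A) := by
  set B := TensorProduct k (AlgebraicClosure k) A with hB
  set q : Ideal B := (Ideal.map
      (Algebra.TensorProduct.includeRight : A →ₐ[k] B) p).radical with hq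
  haveI hqp : q.IsPrime := hgeom
  -- a minimal prime below q
  obtain ⟨P₀, hP₀, hP₀q⟩ :=
    Ideal.exists_minimalPrimes_le (I := (⊥ : Ideal B)) (J := q) bot_le
  haveI := geomIrred.isIntegral_tensor k A
  refine ⟨P₀, hP₀, fun Q hQ => ?_⟩
  haveI hQp : Q.IsPrime := hQ.1.1
  -- lying over: a prime m above Q contracting to p
  have hcomap : Q.comap (algebraMap A B) = ⊥ := geomIrred.comap_eq_bot k A Q hQ
  obtain ⟨m, hmQ, hmp, hmc⟩ := Ideal.exists_ideal_over_prime_of_isIntegral p Q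
    (by rw [hcomap]; exact bot_le)
  -- pB ≤ m, hence q ≤ m, hence P₀ ≤ m
  have hpm : Ideal.map (Algebra.TensorProduct.includeRight : A →ₐ[k] B) p ≤ m := by
    rw [Ideal.map_le_iff_le_comap]
    exact le_of_eq hmc.symm
  have hqm : q ≤ m := hmp.radical_le_iff.mpr hpm
  by_contra hne
  have := hcomax Q hQ P₀ hP₀ hne
  exact hmp.ne_top (top_le_iff.mp (this ▸ sup_le hmQ (hP₀q.trans hqm)))
end
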